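/- arXiv:2011.04926 — 2 statements merged into one kernel-verified Lean document; each statement's English description precedes it below -/
import Mathlib

section
/- Let α ∈ (1/2, 1) with αn ∈ ℕ, let a ≠ b ∈ ℝ^d, and let X = (x_1, …, x_n) with x_1 = … = x_{αn} = a and x_{αn+1} = … = x_n = b. Suppose Ŷ = (ŷ_1, …, ŷ_n) satisfies ŷ_j ∈ {a, b} for every j, with #{j : ŷ_j = a} = n_1 and #{j : ŷ_j = b} = n − n_1. Then Ŷ is a strict local minimum of Y ↦ φ_JS(Y, X); moreover, if n_1 ≠ αn, then Ŷ is a sub-optimal strict local minimum, i.e., φ_JS(Ŷ, X) > −log 2. -/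
open scoped BigOperators

section AuxLemmas

lemma GG_pos {c : ℝ} (h0 : 0 < c) (h1 : c < 1) :
    0 < Real.log (1 - c/2) - Real.log (1 - c) := by
  have := Real.log_lt_log (by linarith : (0:ℝ) < 1 - c) (by linarith : 1 - c < 1 - c/2)
  linarith

lemma GG_mono {c1 c2 : ℝ} (h0 : 0 < c1) (h12 : c1 ≤ c2) (h1 : c2 < 1) :
    Real.log (1 - c1/2) - Real.log (1 - c1) ≤ Real.log (1 - c2/2) - Real.log (1 - c2) := by
  have h1c1 : (0:ℝ) < 1 - c1 := by linarith
  have h1c2 : (0:ℝ) < 1 - c2 := by linarith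
  have h1c12 : (0:ℝ) < 1 - c1/2 := by linarith
  have h1c22 : (0:ℝ) < 1 - c2/2 := by linarith
  have key : (1 - c1/2) * (1 - c2) ≤ (1 - c2/2) * (1 - c1) := by nlinarith
  have h2 := Real.log_le_log (by positivity) key
  rw [Real.log_mul (by positivity) (by positivity), Real.log_mul (by positivity) (by positivity)] at h2
  linarith

lemma gibbs_le (m l p : ℝ) (hm : 0 ≤ m) (hl : 0 ≤ l) (hp0 : 0 < p) (hp1 : p < 1) :
    m * Real.log p + l * Real.log (1 - p) ≤ m * Real.log (m/(m+l)) + l * Real.log (l/(m+l)) := by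
  have h1p : (0:ℝ) < 1 - p := by linarith
  rcases hm.eq_or_lt with hm0 | hm0
  · rcases hl.eq_or_lt with hl0 | hl0
    · simp [← hm0, ← hl0]
    · have h : l * Real.log (1 - p) ≤ 0 :=
        mul_nonpos_of_nonneg_of_nonpos hl (Real.log_nonpos (by linarith) (by linarith))
      rw [← hm0]
      simp only [zero_mul, zero_add, div_self (ne_of_gt hl0), Real.log_one, mul_zero]
      linarith
  · rcases hl.eq_or_lt with hl0 | hl0
    · have h : m * Real.log p ≤ 0 :=
        mul_nonpos_of_nonneg_of_nonpos hm (Real.log_nonpos (by linarith) (by linarith))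
      rw [← hl0]
      simp only [zero_mul, add_zero, div_self (ne_of_gt hm0), Real.log_one, mul_zero]
      linarith
    · have hml : 0 < m + l := by linarith
      have e0 : Real.log (m/(m+l)) = Real.log m - Real.log (m+l) :=
        Real.log_div (by positivity) (by positivity)
      have e0' : Real.log (l/(m+l)) = Real.log l - Real.log (m+l) :=
        Real.log_div (by positivity) (by positivity)
      have e1 : Real.log (p*(m+l)/m) = Real.log p + Real.log (m+l) - Real.log m := by
        rw [Real.log_div (by positivity) (by positivity), Real.log_mul (by positivity) (by positivity)]
      have e2 : Real.log ((1-p)*(m+l)/l) = Real.log (1-p) + Real.log (m+l) - Real.log l := by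
        rw [Real.log_div (by positivity) (by positivity), Real.log_mul (by positivity) (by positivity)]
      have h1 : Real.log (p*(m+l)/m) ≤ p * (m + l) / m - 1 :=
        Real.log_le_sub_one_of_pos (by positivity)
      have h2 : Real.log ((1-p)*(m+l)/l) ≤ (1-p) * (m + l) / l - 1 :=
        Real.log_le_sub_one_of_pos (by positivity)
      rw [e1] at h1; rw [e2] at h2
      have h1' := mul_le_mul_of_nonneg_left h1 hm
      have h2' := mul_le_mul_of_nonneg_left h2 hl
      have f1 : m * (p * (m + l) / m - 1) = p * (m+l) - m := by field_simp
      have f2 : l * ((1-p) * (m + l) / l - 1) = (1-p) * (m+l) - l := by field_simp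
      rw [f1] at h1'; rw [f2] at h2'
      rw [e0, e0']
      nlinarith [h1', h2']

lemma gibbs_gt (m l : ℝ) (hm : 0 < m) (hl : 0 ≤ l) (hml : m ≠ l) :
    ∃ p : ℝ, 0 < p ∧ p < 1 ∧ -(m+l) * Real.log 2 < m * Real.log p + l * Real.log (1-p) := by
  rcases hl.eq_or_lt with hl0 | hl0
  · refine ⟨3/4, by norm_num, by norm_num, ?_⟩
    rw [← hl0]
    have h : Real.log (1/2) < Real.log (3/4) := Real.log_lt_log (by norm_num) (by norm_num)
    rw [Real.log_div (by norm_num) (by norm_num), Real.log_one] at h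
    nlinarith [h]
  · have hml2 : 0 < m + l := by linarith
    refine ⟨m/(m+l), by positivity, by rw [div_lt_one hml2]; linarith, ?_⟩
    have h1p : 1 - m/(m+l) = l/(m+l) := by field_simp; ring
    rw [h1p]
    have hu : Real.log ((m+l)/(2*m)) < (m+l)/(2*m) - 1 := by
      apply Real.log_lt_sub_one_of_pos (by positivity)
      intro h
      rw [div_eq_one_iff_eq (by positivity)] at h
      exact hml (by linarith)
    have hv : Real.log ((m+l)/(2*l)) ≤ (m+l)/(2*l) - 1 := Real.log_le_sub_one_of_pos (by positivity)
    have eu : Real.log ((m+l)/(2*m)) = -Real.log 2 - Real.log (m/(m+l)) := by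
      rw [Real.log_div (by positivity) (by positivity), Real.log_mul (by norm_num) (by positivity),
        Real.log_div (by positivity) (by positivity)]
      ring
    have ev : Real.log ((m+l)/(2*l)) = -Real.log 2 - Real.log (l/(m+l)) := by
      rw [Real.log_div (by positivity) (by positivity), Real.log_mul (by norm_num) (by positivity),
        Real.log_div (by positivity) (by positivity)]
      ring
    rw [eu] at hu; rw [ev] at hv
    have hu' := mul_lt_mul_of_pos_left hu hm
    have hv' := mul_le_mul_of_nonneg_left hv hl
    have e1 : m * ((m+l)/(2*m) - 1) = (m+l)/2 - m := by field_simp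
    have e2 : l * ((m+l)/(2*l) - 1) = (m+l)/2 - l := by field_simp
    nlinarith [hu', hv']

lemma key_pq (N M K : ℝ) (hM : 0 < M) (hMN : M < N) (hK0 : 0 ≤ K) (hKN : K ≤ N) :
    ∃ p q : ℝ, 0 < p ∧ p < 1 ∧ 0 < q ∧ q < 1 ∧
      (M * Real.log (M/(M+K)) + K * Real.log (K/(M+K)))
        + ((N-M) * Real.log ((N-M)/((N-M)+(N-K))) + (N-K) * Real.log ((N-K)/((N-M)+(N-K))))
      < ((M * Real.log p + K * Real.log (1-p)) + ((N-M) * Real.log q + (N-K) * Real.log (1-q)))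
        + min (Real.log (1 - p/2) - Real.log (1-p)) (Real.log (1 - q/2) - Real.log (1-q)) := by
  have hNM : 0 < N - M := by linarith
  rcases hK0.eq_or_lt with hK | hK
  · -- K = 0
    have hK' : K = 0 := hK.symm
    subst hK'
    obtain ⟨q, hqdef⟩ : ∃ x : ℝ, x = (N-M)/((N-M)+N) := ⟨_, rfl⟩
    have hq0 : 0 < q := by rw [hqdef]; positivity
    have hq1 : q < 1 := by rw [hqdef, div_lt_one (by linarith)]; linarith
    obtain ⟨Gq, hGq⟩ : ∃ x : ℝ, x = Real.log (1 - q/2) - Real.log (1-q) := ⟨_, rfl⟩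
    have hGqpos : 0 < Gq := hGq ▸ GG_pos hq0 hq1
    obtain ⟨p, hpdef⟩ : ∃ x : ℝ, x = max q (Real.exp (-Gq/(2*M))) := ⟨_, rfl⟩
    have hp0 : 0 < p := by
      rw [hpdef]; exact lt_of_lt_of_le hq0 (le_max_left _ _)
    have hp1 : p < 1 := by
      rw [hpdef]
      apply max_lt hq1
      rw [Real.exp_lt_one_iff]
      exact div_neg_of_neg_of_pos (by linarith) (by positivity)
    refine ⟨p, q, hp0, hp1, hq0, hq1, ?_⟩
    have hmin : min (Real.log (1 - p/2) - Real.log (1-p)) (Real.log (1 - q/2) - Real.log (1-q))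
        = Gq := by
      rw [← hGq]
      exact min_eq_right (hGq ▸ GG_mono hq0 (hpdef ▸ le_max_left _ _) hp1)
    rw [hmin]
    have hlogp : -Gq/(2*M) ≤ Real.log p := by
      apply (Real.le_log_iff_exp_le hp0).mpr
      rw [hpdef]; exact le_max_right _ _
    have hMlogp : -Gq/2 ≤ M * Real.log p := by
      have h2 := mul_le_mul_of_nonneg_left hlogp hM.le
      have e : M * (-Gq/(2*M)) = -Gq/2 := by field_simp
      linarith [e ▸ h2]
    have eA : M * Real.log (M/(M+0)) + 0 * Real.log (0/(M+0)) = 0 := by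
      rw [add_zero, div_self (ne_of_gt hM), Real.log_one]; ring
    have eB1 : N - (0:ℝ) = N := by ring
    rw [eA, eB1, ← hqdef]
    have e1q : Real.log (N/((N-M)+N)) = Real.log (1-q) := by
      rw [hqdef]; congr 1; field_simp; ring
    rw [e1q]
    have hzz : (0:ℝ) * Real.log (1-p) = 0 := by ring
    rw [hzz]
    linarith
  · rcases hKN.eq_or_lt with hKN' | hKN'
    · -- K = N
      subst hKN'
      obtain ⟨p, hpdef⟩ : ∃ x : ℝ, x = M/(M+K) := ⟨_, rfl⟩
      have hp0 : 0 < p := by rw [hpdef]; positivity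
      have hp1 : p < 1 := by rw [hpdef, div_lt_one (by linarith)]; linarith
      obtain ⟨Gp, hGp⟩ : ∃ x : ℝ, x = Real.log (1 - p/2) - Real.log (1-p) := ⟨_, rfl⟩
      have hGppos : 0 < Gp := hGp ▸ GG_pos hp0 hp1
      obtain ⟨q, hqdef⟩ : ∃ x : ℝ, x = max p (Real.exp (-Gp/(2*(K-M)))) := ⟨_, rfl⟩
      have hq0 : 0 < q := by
        rw [hqdef]; exact lt_of_lt_of_le hp0 (le_max_left _ _)
      have hq1 : q < 1 := by
        rw [hqdef]
        apply max_lt hp1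
        rw [Real.exp_lt_one_iff]
        exact div_neg_of_neg_of_pos (by linarith) (by positivity)
      refine ⟨p, q, hp0, hp1, hq0, hq1, ?_⟩
      have hmin : min (Real.log (1 - p/2) - Real.log (1-p)) (Real.log (1 - q/2) - Real.log (1-q))
          = Gp := by
        rw [← hGp]
        exact min_eq_left (hGp ▸ GG_mono hp0 (hqdef ▸ le_max_left _ _) hq1)
      rw [hmin]
      have hlogq : -Gp/(2*(K-M)) ≤ Real.log q := by
        apply (Real.le_log_iff_exp_le hq0).mpr
        rw [hqdef]; exact le_max_right _ _
      have hKMlogq : -Gp/2 ≤ (K-M) * Real.log q := by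
        have h2 := mul_le_mul_of_nonneg_left hlogq hNM.le
        have e : (K-M) * (-Gp/(2*(K-M))) = -Gp/2 := by field_simp
        linarith [e ▸ h2]
      have hz : K - K = (0:ℝ) := by ring
      rw [hz]
      have eB : (K-M) * Real.log ((K-M)/((K-M)+0)) + 0 * Real.log (0/((K-M)+0)) = 0 := by
        rw [add_zero, div_self (ne_of_gt hNM), Real.log_one]; ring
      rw [eB, ← hpdef]
      have e1p : Real.log (K/(M+K)) = Real.log (1-p) := by
        rw [hpdef]; congr 1; field_simp; ring
      rw [e1p]
      have hzz : (0:ℝ) * Real.log (1-q) = 0 := by ring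
      rw [hzz]
      linarith
    · -- 0 < K < N
      have hNK : 0 < N - K := by linarith
      refine ⟨M/(M+K), (N-M)/((N-M)+(N-K)), by positivity,
        by rw [div_lt_one (by linarith)]; linarith, by positivity,
        by rw [div_lt_one (by positivity)]; linarith, ?_⟩
      have e1 : 1 - M/(M+K) = K/(M+K) := by field_simp; ring
      have e2 : 1 - (N-M)/((N-M)+(N-K)) = (N-K)/((N-M)+(N-K)) := by field_simp; ring
      rw [e1, e2]
      have hp0 : 0 < M/(M+K) := by positivity
      have hp1 : M/(M+K) < 1 := by rw [div_lt_one (by linarith)]; linarith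
      have hq0 : 0 < (N-M)/((N-M)+(N-K)) := by positivity
      have hq1 : (N-M)/((N-M)+(N-K)) < 1 := by rw [div_lt_one (by positivity)]; linarith
      have m1 := GG_pos hp0 hp1
      have m2 := GG_pos hq0 hq1
      rw [e1] at m1; rw [e2] at m2
      have := lt_min m1 m2
      linarith [this]

lemma exists_D0 {E : Type*} [MetricSpace E] (a b : E) (hab : a ≠ b) {p q : ℝ}
    (hp : p ∈ Set.Ioo (0:ℝ) 1) (hq : q ∈ Set.Ioo (0:ℝ) 1) :
    ∃ D : E → ℝ, Continuous D ∧ (∀ u, D u ∈ Set.Ioo (0:ℝ) 1) ∧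
      (∀ u, dist u a < dist a b / 4 → D u = p) ∧
      (∀ u, dist u b < dist a b / 4 → D u = q) := by
  set r : ℝ := dist a b / 4 with hr
  have hrpos : 0 < r := by
    have := dist_pos.mpr hab
    simp only [hr]; linarith
  set f : E → ℝ := fun u => min 1 (max 0 ((dist u a - r)/r)) with hf
  have hf01 : ∀ u, 0 ≤ f u ∧ f u ≤ 1 := by
    intro u
    exact ⟨le_min (by norm_num) (le_max_left _ _), min_le_left _ _⟩
  refine ⟨fun u => p + (q - p) * f u, ?_, ?_, ?_, ?_⟩
  · apply continuous_const.add
    apply continuous_const.mul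
    exact continuous_const.min ((continuous_const.max
      (((continuous_id.dist continuous_const).sub continuous_const).div_const r)))
  · intro u
    obtain ⟨h0, h1⟩ := hf01 u
    constructor
    · show 0 < p + (q - p) * f u
      rcases le_total p q with h | h
      · nlinarith [hp.1]
      · nlinarith [hq.1]
    · show p + (q - p) * f u < 1
      rcases le_total p q with h | h
      · nlinarith [hq.2]
      · nlinarith [hp.2]
  · intro u hu
    have hfu : f u = 0 := by
      simp only [hf]
      rw [max_eq_left (by rw [div_nonpos_iff]; right; constructor <;> linarith)]
      rw [min_eq_right (by norm_num)]
    show p + (q - p) * f u = p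
    rw [hfu]; ring
  · intro u hu
    have hd : dist u a ≥ 3 * r := by
      have htri : dist a u ≥ dist a b - dist u b := by
        have h := dist_triangle a u b
        rw [dist_comm u b] at h ⊢
        linarith
      have hab4 : dist a b = 4 * r := by simp only [hr]; ring
      rw [dist_comm u a]; rw [hab4] at htri; linarith
    have hfu : f u = 1 := by
      simp only [hf]
      rw [max_eq_right (div_nonneg (by linarith) hrpos.le)]
      rw [min_eq_left (by rw [le_div_iff₀ hrpos]; linarith)]
    show p + (q - p) * f u = q
    rw [hfu]; ring

lemma exists_dip {E : Type*} [MetricSpace E] {D0 : E → ℝ} (hc : Continuous D0)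
    (h01 : ∀ u, D0 u ∈ Set.Ioo (0:ℝ) 1) {y0 a b : E} (ha : y0 ≠ a) (hb : y0 ≠ b) :
    ∃ D : E → ℝ, Continuous D ∧ (∀ u, D u ∈ Set.Ioo (0:ℝ) 1) ∧
      (∀ u, D u ≤ D0 u) ∧ D y0 = D0 y0 / 2 ∧ D a = D0 a ∧ D b = D0 b := by
  set ρ : ℝ := min (dist y0 a) (dist y0 b) / 2 with hρ
  have h1' := dist_pos.mpr ha
  have h2' := dist_pos.mpr hb
  have hρpos : 0 < ρ := by
    simp only [hρ]
    rcases le_total (dist y0 a) (dist y0 b) with h | h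
    · rw [min_eq_left h]; linarith
    · rw [min_eq_right h]; linarith
  set g : E → ℝ := fun u => max 0 (1 - dist u y0 / ρ) with hg
  have hg01 : ∀ u, 0 ≤ g u ∧ g u ≤ 1 := by
    intro u
    refine ⟨le_max_left _ _, ?_⟩
    apply max_le (by norm_num)
    have : 0 ≤ dist u y0 / ρ := by positivity
    linarith
  have hgfar : ∀ u, ρ ≤ dist u y0 → g u = 0 := by
    intro u hu
    simp only [hg]
    apply max_eq_left
    rw [sub_nonpos, le_div_iff₀ hρpos]; linarith
  refine ⟨fun u => D0 u * (1 - g u / 2), ?_, ?_, ?_, ?_, ?_, ?_⟩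
  · apply hc.mul
    apply continuous_const.sub
    apply Continuous.div_const
    exact continuous_const.max (continuous_const.sub ((continuous_id.dist continuous_const).div_const ρ))
  · intro u
    obtain ⟨h0, h1⟩ := hg01 u
    obtain ⟨hD0, hD1⟩ := h01 u
    constructor
    · show 0 < D0 u * (1 - g u / 2); nlinarith
    · show D0 u * (1 - g u / 2) < 1; nlinarith
  · intro u
    obtain ⟨h0, h1⟩ := hg01 u
    obtain ⟨hD0, hD1⟩ := h01 u
    show D0 u * (1 - g u / 2) ≤ D0 u
    nlinarith
  · have hgy : g y0 = 1 := by simp [hg]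
    show D0 y0 * (1 - g y0 / 2) = D0 y0 / 2
    rw [hgy]; ring
  · have hga : g a = 0 := hgfar a (by
      rw [dist_comm]
      simp only [hρ]
      rcases le_total (dist y0 a) (dist y0 b) with h | h
      · rw [min_eq_left h]; linarith
      · rw [min_eq_right h]; linarith)
    show D0 a * (1 - g a / 2) = D0 a
    rw [hga]; ring
  · have hgb : g b = 0 := hgfar b (by
      rw [dist_comm]
      simp only [hρ]
      rcases le_total (dist y0 a) (dist y0 b) with h | h
      · rw [min_eq_left h]; linarith
      · rw [min_eq_right h]; linarith)
    show D0 b * (1 - g b / 2) = D0 b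
    rw [hgb]; ring

lemma card_filter_lt (n n1 : ℕ) (h : n1 ≤ n) :
    (Finset.univ.filter (fun i : Fin n => (i:ℕ) < n1)).card = n1 := by
  rw [← Finset.card_image_of_injective _ Fin.val_injective]
  have himg : (Finset.univ.filter (fun i : Fin n => (i:ℕ) < n1)).image Fin.val = Finset.range n1 := by
    ext m
    simp only [Finset.mem_image, Finset.mem_filter, Finset.mem_univ, true_and, Finset.mem_range]
    constructor
    · rintro ⟨i, hi, rfl⟩; exact hi
    · intro hm; exact ⟨⟨m, lt_of_lt_of_le hm h⟩, hm, rfl⟩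
  rw [himg, Finset.card_range]

end AuxLemmas

/-- The JS-GAN loss. -/
noncomputable def phiJS {d n : ℕ} (x Y : Fin n → EuclideanSpace ℝ (Fin d)) : ℝ :=
  sSup {s : ℝ | ∃ D : EuclideanSpace ℝ (Fin d) → ℝ, Continuous D ∧
    (∀ u, D u ∈ Set.Ioo (0 : ℝ) 1) ∧
    s = (1 / (2 * (n : ℝ))) * ∑ i, (Real.log (D (x i)) + Real.log (1 - D (Y i)))}

theorem stmt10 {d n : ℕ} (hd : 1 ≤ d) (hn : 1 ≤ n)
    (α : ℝ) (hα : 1 / 2 < α ∧ α < 1)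
    (n1 : ℕ) (hn1 : (n1 : ℝ) = α * n)
    (a b : EuclideanSpace ℝ (Fin d)) (hab : a ≠ b)
    (Yhat : Fin n → EuclideanSpace ℝ (Fin d))
    (hY : ∀ j, Yhat j = a ∨ Yhat j = b)
    (k : ℕ) (hk1 : Set.ncard {j : Fin n | Yhat j = a} = k)
    (hk2 : Set.ncard {j : Fin n | Yhat j = b} = n - k) :
    (∃ ε > 0, ∀ Y : Fin n → EuclideanSpace ℝ (Fin d),
      Y ≠ Yhat → dist Y Yhat < ε →
      phiJS (fun i => if (i : ℕ) < n1 then a else b) Yhat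
        < phiJS (fun i => if (i : ℕ) < n1 then a else b) Y) ∧
    (k ≠ n1 →
      -Real.log 2 < phiJS (fun i => if (i : ℕ) < n1 then a else b) Yhat) := by
  classical
  obtain ⟨hα1, hα2⟩ := hα
  have hnR : (0:ℝ) < n := by
    have : (1:ℝ) ≤ n := by exact_mod_cast hn
    linarith
  have hn1R : (0:ℝ) < n1 := by rw [hn1]; nlinarith
  have hn1ltnR : (n1:ℝ) < n := by rw [hn1]; nlinarith
  have hn1n : n1 ≤ n := by exact_mod_cast le_of_lt hn1ltnR
  have hkn : k ≤ n := by
    rw [← hk1]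
    have h := Set.ncard_le_ncard (Set.subset_univ {j : Fin n | Yhat j = a}) Set.finite_univ
    simpa [Set.ncard_univ] using h
  have hknR : (k:ℝ) ≤ n := by exact_mod_cast hkn
  have hk0R : (0:ℝ) ≤ k := Nat.cast_nonneg k
  set x : Fin n → EuclideanSpace ℝ (Fin d) := fun i => if (i : ℕ) < n1 then a else b with hx
  -- cardinality facts
  have hcard_a : (Finset.univ.filter (fun j : Fin n => Yhat j = a)).card = k := by
    rw [← hk1, Set.ncard_eq_toFinset_card']
    simp [Set.toFinset_setOf]
  have hcard_b : (Finset.univ.filter (fun j : Fin n => ¬ Yhat j = a)).card = n - k := by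
    have h := Finset.card_filter_add_card_filter_not
      (s := (Finset.univ : Finset (Fin n))) (p := fun j : Fin n => Yhat j = a)
    rw [Finset.card_univ, Fintype.card_fin] at h
    omega
  have hflt : (Finset.univ.filter (fun i : Fin n => (i:ℕ) < n1)).card = n1 :=
    card_filter_lt n n1 hn1n
  have hfge : (Finset.univ.filter (fun i : Fin n => ¬ (i:ℕ) < n1)).card = n - n1 := by
    have h := Finset.card_filter_add_card_filter_not
      (s := (Finset.univ : Finset (Fin n))) (p := fun i : Fin n => (i:ℕ) < n1)
    rw [Finset.card_univ, Fintype.card_fin] at h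
    omega
  -- sum lemmas
  have hsum_x' : ∀ c1 c2 : ℝ, ∑ i : Fin n, (if (i:ℕ) < n1 then c1 else c2)
      = (n1:ℝ) * c1 + ((n:ℝ) - n1) * c2 := by
    intro c1 c2
    rw [Finset.sum_ite, Finset.sum_const, Finset.sum_const, hflt, hfge,
      nsmul_eq_mul, nsmul_eq_mul, Nat.cast_sub hn1n]
  have hsum_Y' : ∀ c1 c2 : ℝ, ∑ i : Fin n, (if Yhat i = a then c1 else c2)
      = (k:ℝ) * c1 + ((n:ℝ) - k) * c2 := by
    intro c1 c2
    rw [Finset.sum_ite, Finset.sum_const, Finset.sum_const, hcard_a, hcard_b,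
      nsmul_eq_mul, nsmul_eq_mul, Nat.cast_sub hkn]
  -- membership gives lower bound for phiJS
  have key_mem : ∀ (Y : Fin n → EuclideanSpace ℝ (Fin d)) (D : EuclideanSpace ℝ (Fin d) → ℝ),
      Continuous D → (∀ u, D u ∈ Set.Ioo (0:ℝ) 1) →
      (1 / (2 * (n : ℝ))) * ∑ i, (Real.log (D (x i)) + Real.log (1 - D (Y i))) ≤ phiJS x Y := by
    intro Y D hc h01
    unfold phiJS
    apply le_csSup
    · refine ⟨0, ?_⟩
      rintro s ⟨D', hc', h01', rfl⟩
      apply mul_nonpos_of_nonneg_of_nonpos (by positivity)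
      apply Finset.sum_nonpos
      intro i _
      have h1 := h01' (x i)
      have h2 := h01' (Y i)
      exact add_nonpos (Real.log_nonpos h1.1.le h1.2.le)
        (Real.log_nonpos (by linarith [h2.2]) (by linarith [h2.1]))
    · exact ⟨D, hc, h01, rfl⟩
  have key_le : ∀ (Y : Fin n → EuclideanSpace ℝ (Fin d)) (V : ℝ),
      (∀ D : EuclideanSpace ℝ (Fin d) → ℝ, Continuous D → (∀ u, D u ∈ Set.Ioo (0:ℝ) 1) →
        (1 / (2 * (n : ℝ))) * ∑ i, (Real.log (D (x i)) + Real.log (1 - D (Y i))) ≤ V) →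
      phiJS x Y ≤ V := by
    intro Y V h
    unfold phiJS
    apply csSup_le
    · exact ⟨_, (fun _ => (1:ℝ)/2), continuous_const, fun u => by norm_num, rfl⟩
    · rintro s ⟨D, hc, h01, rfl⟩
      exact h D hc h01
  -- split sums over Yhat
  have hsum_hat : ∀ D : EuclideanSpace ℝ (Fin d) → ℝ,
      ∑ i, (Real.log (D (x i)) + Real.log (1 - D (Yhat i)))
      = ((n1:ℝ) * Real.log (D a) + ((n:ℝ) - n1) * Real.log (D b))
        + ((k:ℝ) * Real.log (1 - D a) + ((n:ℝ) - k) * Real.log (1 - D b)) := by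
    intro D
    rw [Finset.sum_add_distrib]
    have e1 : ∑ i, Real.log (D (x i))
        = ∑ i : Fin n, (if (i:ℕ) < n1 then Real.log (D a) else Real.log (D b)) := by
      apply Finset.sum_congr rfl
      intro i _
      simp only [hx]
      by_cases hi : (i:ℕ) < n1 <;> simp [hi]
    have e2 : ∑ i, Real.log (1 - D (Yhat i))
        = ∑ i : Fin n, (if Yhat i = a then Real.log (1 - D a) else Real.log (1 - D b)) := by
      apply Finset.sum_congr rfl
      intro i _
      rcases hY i with h | h
      · rw [if_pos h, h]
      · rw [if_neg (fun ha' => hab (ha'.symm.trans h)), h]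
    rw [e1, e2, hsum_x' _ _, hsum_Y' _ _]
  -- the upper bound for phiJS x Yhat
  have hub : phiJS x Yhat ≤ (1 / (2 * (n:ℝ))) *
      (((n1:ℝ) * Real.log ((n1:ℝ)/((n1:ℝ)+(k:ℝ))) + (k:ℝ) * Real.log ((k:ℝ)/((n1:ℝ)+(k:ℝ))))
        + (((n:ℝ)-(n1:ℝ)) * Real.log (((n:ℝ)-(n1:ℝ))/(((n:ℝ)-(n1:ℝ))+((n:ℝ)-(k:ℝ))))
          + ((n:ℝ)-(k:ℝ)) * Real.log (((n:ℝ)-(k:ℝ))/(((n:ℝ)-(n1:ℝ))+((n:ℝ)-(k:ℝ)))))) := by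
    apply key_le
    intro D hc h01
    rw [hsum_hat D]
    have hDa := h01 a
    have hDb := h01 b
    have g1 := gibbs_le (n1:ℝ) (k:ℝ) (D a) hn1R.le hk0R hDa.1 hDa.2
    have g2 := gibbs_le ((n:ℝ)-(n1:ℝ)) ((n:ℝ)-(k:ℝ)) (D b)
      (by linarith) (by linarith) hDb.1 hDb.2
    apply mul_le_mul_of_nonneg_left _ (by positivity)
    linarith
  constructor
  · -- Part 1: strict local minimum
    obtain ⟨p, q, hp0, hp1, hq0, hq1, hUI⟩ :=
      key_pq (n:ℝ) (n1:ℝ) (k:ℝ) hn1R hn1ltnR hk0R hknR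
    have hrpos : 0 < dist a b / 4 := by
      have := dist_pos.mpr hab
      linarith
    refine ⟨dist a b / 4, hrpos, ?_⟩
    intro Y hYne hYd
    obtain ⟨j0, hj0⟩ := Function.ne_iff.mp hYne
    have hdj : ∀ j, dist (Y j) (Yhat j) < dist a b / 4 :=
      fun j => lt_of_le_of_lt (dist_le_pi_dist Y Yhat j) hYd
    -- Y j0 differs from both a and b
    have hy0 : Y j0 ≠ a ∧ Y j0 ≠ b := by
      rcases hY j0 with h | h
      · have hda : dist (Y j0) a < dist a b / 4 := h ▸ hdj j0
        constructor
        · exact h ▸ hj0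
        · intro hEq
          rw [hEq, dist_comm] at hda
          linarith [dist_pos.mpr hab]
      · have hdb : dist (Y j0) b < dist a b / 4 := h ▸ hdj j0
        constructor
        · intro hEq
          rw [hEq] at hdb
          have hcm : dist a b = dist b a := dist_comm a b
          linarith [dist_pos.mpr hab, hcm, hdb]
        · exact h ▸ hj0
    obtain ⟨D0, hD0c, hD001, hD0a, hD0b⟩ :=
      exists_D0 a b hab (p := p) (q := q) ⟨hp0, hp1⟩ ⟨hq0, hq1⟩
    obtain ⟨D, hDc, hD01, hDle, hDy0, hDa, hDb⟩ :=
      exists_dip hD0c hD001 hy0.1 hy0.2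
    have hD0a' : D0 a = p := hD0a a (by rw [dist_self]; exact hrpos)
    have hD0b' : D0 b = q := hD0b b (by rw [dist_self]; exact hrpos)
    have hDa' : D a = p := by rw [hDa, hD0a']
    have hDb' : D b = q := by rw [hDb, hD0b']
    -- sum over x
    have hsx : ∑ i, Real.log (D (x i)) = (n1:ℝ) * Real.log p + ((n:ℝ) - n1) * Real.log q := by
      have e1 : ∑ i, Real.log (D (x i))
          = ∑ i : Fin n, (if (i:ℕ) < n1 then Real.log p else Real.log q) := by
        apply Finset.sum_congr rfl
        intro i _
        simp only [hx]
        by_cases hi : (i:ℕ) < n1 <;> simp [hi, hDa', hDb']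
      rw [e1, hsum_x' _ _]
    -- base function and bounds for the Y-sum
    set Gp : ℝ := Real.log (1 - p/2) - Real.log (1-p) with hGpd
    set Gq : ℝ := Real.log (1 - q/2) - Real.log (1-q) with hGqd
    set base : Fin n → ℝ := fun i => if Yhat i = a then Real.log (1-p) else Real.log (1-q)
      with hbase
    have hterm : ∀ i, base i ≤ Real.log (1 - D (Y i)) := by
      intro i
      rcases hY i with h | h
      · have hD0i : D0 (Y i) = p := hD0a (Y i) (h ▸ hdj i)
        have hle : D (Y i) ≤ p := hD0i ▸ hDle (Y i)
        have hbi : base i = Real.log (1-p) := if_pos h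
        rw [hbi]
        exact Real.log_le_log (by linarith) (by linarith)
      · have hD0i : D0 (Y i) = q := hD0b (Y i) (h ▸ hdj i)
        have hle : D (Y i) ≤ q := hD0i ▸ hDle (Y i)
        have hbi : base i = Real.log (1-q) := if_neg (fun ha' => hab (ha'.symm.trans h))
        rw [hbi]
        exact Real.log_le_log (by linarith) (by linarith)
    have hj0term : base j0 + min Gp Gq ≤ Real.log (1 - D (Y j0)) := by
      rcases hY j0 with h | h
      · have hD0i : D0 (Y j0) = p := hD0a (Y j0) (h ▸ hdj j0)
        have hDv : D (Y j0) = p/2 := by rw [hDy0, hD0i]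
        have hbi : base j0 = Real.log (1-p) := if_pos h
        rw [hbi, hDv]
        have := min_le_left Gp Gq
        rw [hGpd] at this
        linarith
      · have hD0i : D0 (Y j0) = q := hD0b (Y j0) (h ▸ hdj j0)
        have hDv : D (Y j0) = q/2 := by rw [hDy0, hD0i]
        have hbi : base j0 = Real.log (1-q) := if_neg (fun ha' => hab (ha'.symm.trans h))
        rw [hbi, hDv]
        have := min_le_right Gp Gq
        rw [hGqd] at this
        linarith
    have hsbase : ∑ i, base i = (k:ℝ) * Real.log (1-p) + ((n:ℝ) - k) * Real.log (1-q) := by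
      rw [hbase]
      exact hsum_Y' _ _
    have hsY : ∑ i, base i + min Gp Gq ≤ ∑ i, Real.log (1 - D (Y i)) := by
      have h1 : ∀ i ∈ Finset.univ, 0 ≤ Real.log (1 - D (Y i)) - base i :=
        fun i _ => by linarith [hterm i]
      have h2 := Finset.single_le_sum h1 (Finset.mem_univ j0)
      have h3 : ∑ i, (Real.log (1 - D (Y i)) - base i)
          = ∑ i, Real.log (1 - D (Y i)) - ∑ i, base i := Finset.sum_sub_distrib _ _
      rw [h3] at h2
      linarith [hj0term]
    -- put it together
    have hfull : ∑ i, (Real.log (D (x i)) + Real.log (1 - D (Y i)))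
        ≥ (((n1:ℝ) * Real.log p + (k:ℝ) * Real.log (1-p))
            + (((n:ℝ)-n1) * Real.log q + ((n:ℝ)-k) * Real.log (1-q))) + min Gp Gq := by
      rw [Finset.sum_add_distrib, hsx]
      linarith [hsY, hsbase]
    have hval := key_mem Y D hDc hD01
    have hlt : (1 / (2 * (n:ℝ))) *
        (((n1:ℝ) * Real.log ((n1:ℝ)/((n1:ℝ)+(k:ℝ))) + (k:ℝ) * Real.log ((k:ℝ)/((n1:ℝ)+(k:ℝ))))
          + (((n:ℝ)-(n1:ℝ)) * Real.log (((n:ℝ)-(n1:ℝ))/(((n:ℝ)-(n1:ℝ))+((n:ℝ)-(k:ℝ))))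
            + ((n:ℝ)-(k:ℝ)) * Real.log (((n:ℝ)-(k:ℝ))/(((n:ℝ)-(n1:ℝ))+((n:ℝ)-(k:ℝ))))))
        < (1 / (2 * (n:ℝ))) * ∑ i, (Real.log (D (x i)) + Real.log (1 - D (Y i))) := by
      apply mul_lt_mul_of_pos_left _ (by positivity)
      calc ((n1:ℝ) * Real.log ((n1:ℝ)/((n1:ℝ)+(k:ℝ))) + (k:ℝ) * Real.log ((k:ℝ)/((n1:ℝ)+(k:ℝ))))
          + (((n:ℝ)-(n1:ℝ)) * Real.log (((n:ℝ)-(n1:ℝ))/(((n:ℝ)-(n1:ℝ))+((n:ℝ)-(k:ℝ))))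
            + ((n:ℝ)-(k:ℝ)) * Real.log (((n:ℝ)-(k:ℝ))/(((n:ℝ)-(n1:ℝ))+((n:ℝ)-(k:ℝ)))))
          < (((n1:ℝ) * Real.log p + (k:ℝ) * Real.log (1-p))
            + (((n:ℝ)-(n1:ℝ)) * Real.log q + ((n:ℝ)-(k:ℝ)) * Real.log (1-q)))
            + min (Real.log (1 - p/2) - Real.log (1-p)) (Real.log (1 - q/2) - Real.log (1-q)) := hUI
        _ ≤ ∑ i, (Real.log (D (x i)) + Real.log (1 - D (Y i))) := by
            rw [hGpd, hGqd] at hfull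
            linarith [hfull]
    exact lt_of_le_of_lt hub (lt_of_lt_of_le hlt hval)
  · -- Part 2: sub-optimality
    intro hkn1
    have hkne : (n1:ℝ) ≠ (k:ℝ) := by
      intro h
      exact hkn1 (by exact_mod_cast h.symm)
    obtain ⟨p, hp0, hp1, hpgt⟩ := gibbs_gt (n1:ℝ) (k:ℝ) hn1R hk0R hkne
    obtain ⟨D, hDc, hD01, hnear_a, hnear_b⟩ :=
      exists_D0 a b hab (p := p) (q := 1/2) ⟨hp0, hp1⟩ ⟨by norm_num, by norm_num⟩
    have hrpos : 0 < dist a b / 4 := by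
      have := dist_pos.mpr hab
      linarith
    have hDa : D a = p := hnear_a a (by rw [dist_self]; exact hrpos)
    have hDb : D b = 1/2 := hnear_b b (by rw [dist_self]; exact hrpos)
    have hval := key_mem Yhat D hDc hD01
    rw [hsum_hat D, hDa, hDb] at hval
    have h12 : Real.log ((1:ℝ)/2) = -Real.log 2 := by
      rw [one_div, Real.log_inv]
    have h112 : (1:ℝ) - 1/2 = 1/2 := by norm_num
    rw [h112, h12] at hval
    have hinner : -(2*(n:ℝ)) * Real.log 2
        < ((n1:ℝ) * Real.log p + ((n:ℝ) - n1) * (-Real.log 2))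
          + ((k:ℝ) * Real.log (1-p) + ((n:ℝ) - k) * (-Real.log 2)) := by
      have e : ((n1:ℝ) * Real.log p + ((n:ℝ) - n1) * (-Real.log 2))
          + ((k:ℝ) * Real.log (1-p) + ((n:ℝ) - k) * (-Real.log 2))
          = (((n1:ℝ) * Real.log p + (k:ℝ) * Real.log (1-p)))
            + (-((2:ℝ)*(n:ℝ) - (n1:ℝ) - (k:ℝ)) * Real.log 2) := by ring
      have e2 : -(2*(n:ℝ)) * Real.log 2
          = -((n1:ℝ)+(k:ℝ)) * Real.log 2 + (-((2:ℝ)*(n:ℝ) - (n1:ℝ) - (k:ℝ)) * Real.log 2) := by ring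
      rw [e, e2]
      linarith [hpgt]
    have heq : -Real.log 2 = (1 / (2 * (n:ℝ))) * (-(2*(n:ℝ)) * Real.log 2) := by
      field_simp
    calc -Real.log 2 = (1 / (2 * (n:ℝ))) * (-(2*(n:ℝ)) * Real.log 2) := heq
      _ < (1 / (2 * (n:ℝ))) * (((n1:ℝ) * Real.log p + ((n:ℝ) - n1) * (-Real.log 2))
          + ((k:ℝ) * Real.log (1-p) + ((n:ℝ) - k) * (-Real.log 2))) :=
          mul_lt_mul_of_pos_left hinner (by positivity)
      _ ≤ phiJS x Yhat := hval
end

section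
/- Let x_1, …, x_n ∈ ℝ^d be distinct and define the RS-GAN loss φ_RS(Y, X) = sup over continuous f : ℝ^d → ℝ of (1/n) · Σ_{i=1}^n log(1/(1 + exp(f(y_i) − f(x_i)))). If Y ∈ (ℝ^d)^n is not a global minimizer of Y ↦ φ_RS(Y, X), then there exist Ŷ ∈ (ℝ^d)^n and a continuous path γ : [0,1] → (ℝ^d)^n with γ(0) = Y, γ(1) = Ŷ, such that t ↦ φ_RS(γ(t), X) is non-increasing on [0,1] and φ_RS(Ŷ, X) ≤ φ_RS(Y, X) − (log 2)/n. -/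
open scoped BigOperators
open Finset

set_option linter.unusedSectionVars false
namespace RSaux

open scoped Classical

variable {α : Type*} [Fintype α] [DecidableEq α]

/-- one step of the partial dynamics -/
def step (q : α → Option α) : Option α → Option α := fun o => o.bind q

@[simp] lemma step_none (q : α → Option α) : step q none = none := rfl
@[simp] lemma step_some (q : α → Option α) (a : α) : step q (some a) = q a := rfl

lemma iter_none (q : α → Option α) (k : ℕ) : (step q)^[k] none = none := by
  induction k with
  | zero => rfl
  | succ k ih => rw [Function.iterate_succ_apply, step_none, ih]

/-- i is on a cycle -/
def Cyc (q : α → Option α) (i : α) : Prop := ∃ k, 0 < k ∧ (step q)^[k] (some i) = some i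

lemma iter_update_none {q : α → Option α} {i : α} {r : ℕ} {w v : α}
    (h : (step (Function.update q i none))^[r] (some w) = some v) :
    (step q)^[r] (some w) = some v := by
  induction r generalizing w with
  | zero => exact h
  | succ r ih =>
    have hw : w ≠ i := by
      rintro rfl
      rw [Function.iterate_succ_apply, step_some, Function.update_self, iter_none] at h
      cases h
    rw [Function.iterate_succ_apply, step_some, Function.update_of_ne hw] at h
    cases hq : q w with
    | none => rw [hq, iter_none] at h; cases h
    | some u =>
      rw [hq] at h
      rw [Function.iterate_succ_apply, step_some, hq]
      exact ih h

lemma reach_to_update {q : α → Option α} {i : α} :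
    ∀ r, ∀ w, (step q)^[r] (some w) = some i →
      ∃ r', (step (Function.update q i none))^[r'] (some w) = some i := by
  intro r
  induction r with
  | zero => intro w h; exact ⟨0, h⟩
  | succ r ih =>
    intro w h
    by_cases hw : w = i
    · subst hw; exact ⟨0, rfl⟩
    · rw [Function.iterate_succ_apply, step_some] at h
      cases hq : q w with
      | none => rw [hq, iter_none] at h; cases h
      | some u =>
        rw [hq] at h
        obtain ⟨r', hr'⟩ := ih u h
        refine ⟨r' + 1, ?_⟩
        rw [Function.iterate_succ_apply, step_some, Function.update_of_ne hw, hq]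
        exact hr'

/-- master lemma: i is cyclic iff its edge goes into the set of points reaching i
    without using i's edge -/
lemma cyc_iff (q : α → Option α) (i : α) :
    Cyc q i ↔ ∃ w, q i = some w ∧
      ∃ r, (step (Function.update q i none))^[r] (some w) = some i := by
  constructor
  · rintro ⟨k, hk, hc⟩
    obtain ⟨r, rfl⟩ : ∃ r, k = r + 1 := ⟨k - 1, by omega⟩
    rw [Function.iterate_succ_apply, step_some] at hc
    cases hq : q i with
    | none => rw [hq, iter_none] at hc; cases hc
    | some w =>
      rw [hq] at hc
      exact ⟨w, rfl, reach_to_update r w hc⟩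
  · rintro ⟨w, hqi, r, hr⟩
    refine ⟨r + 1, Nat.succ_pos _, ?_⟩
    rw [Function.iterate_succ_apply, step_some, hqi]
    exact iter_update_none hr

lemma cyc_of_update {q : α → Option α} {i j : α}
    (h : Cyc (Function.update q i none) j) : Cyc q j := by
  obtain ⟨k, hk, hc⟩ := h
  exact ⟨k, hk, iter_update_none hc⟩

lemma not_cyc_update_self (q : α → Option α) (i : α) :
    ¬ Cyc (Function.update q i none) i := by
  rintro ⟨k, hk, hc⟩
  obtain ⟨r, rfl⟩ : ∃ r, k = r + 1 := ⟨k - 1, by omega⟩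
  rw [Function.iterate_succ_apply, step_some, Function.update_self, iter_none] at hc
  cases hc

lemma cyc_of_mem_cycle {q : α → Option α} {j i : α} {k r : ℕ} (hk : 0 < k)
    (hkc : (step q)^[k] (some j) = some j)
    (hri : (step q)^[r] (some j) = some i) : Cyc q i := by
  refine ⟨k, hk, ?_⟩
  have : (step q)^[r] ((step q)^[k] (some j)) = (step q)^[k] ((step q)^[r] (some j)) := by
    rw [← Function.iterate_add_apply, ← Function.iterate_add_apply, Nat.add_comm]
  rw [hkc, hri] at this
  rw [← this]

lemma iter_eq_update_of_avoid {q : α → Option α} {i j : α} {k : ℕ}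
    (h : ∀ r < k, (step q)^[r] (some j) ≠ some i) :
    (step (Function.update q i none))^[k] (some j) = (step q)^[k] (some j) := by
  induction k with
  | zero => rfl
  | succ k ih =>
    rw [Function.iterate_succ_apply', Function.iterate_succ_apply',
      ih (fun r hr => h r (Nat.lt_succ_of_lt hr))]
    cases ho : (step q)^[k] (some j) with
    | none => rfl
    | some u =>
      have hu : u ≠ i := fun e => h k (Nat.lt_succ_self k) (by rw [ho, e])
      rw [step_some, step_some, Function.update_of_ne hu]

lemma cyc_update_iff {q : α → Option α} {i : α} (hi : ¬ Cyc q i) (j : α) :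
    Cyc (Function.update q i none) j ↔ Cyc q j := by
  constructor
  · exact cyc_of_update
  · rintro ⟨k, hk, hc⟩
    by_cases hpass : ∃ r < k, (step q)^[r] (some j) = some i
    · obtain ⟨r, _, hr⟩ := hpass
      exact absurd (cyc_of_mem_cycle hk hc hr) hi
    · push_neg at hpass
      exact ⟨k, hk, by rw [iter_eq_update_of_avoid hpass]; exact hc⟩


/-- the successor function (junk value `i` when no edge) -/
noncomputable def nxt (q : α → Option α) (i : α) : α := (q i).getD i

lemma cyc_q_some {q : α → Option α} {i : α} (h : Cyc q i) : q i = some (nxt q i) := by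
  obtain ⟨k, hk, hc⟩ := h
  cases hq : q i with
  | none =>
    obtain ⟨r, rfl⟩ : ∃ r, k = r + 1 := ⟨k - 1, by omega⟩
    rw [Function.iterate_succ_apply, step_some, hq, iter_none] at hc
    cases hc
  | some w => simp [nxt, hq]

lemma cyc_nxt {q : α → Option α} {i : α} (h : Cyc q i) : Cyc q (nxt q i) := by
  obtain ⟨k, hk, hc⟩ := h
  refine ⟨k, hk, ?_⟩
  have h1 : (step q)^[k + 1] (some i) = (step q)^[k] (some (nxt q i)) := by
    rw [Function.iterate_succ_apply, step_some, cyc_q_some ⟨k, hk, hc⟩]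
  have h2 : (step q)^[k + 1] (some i) = some (nxt q i) := by
    rw [Function.iterate_succ_apply', hc, step_some, cyc_q_some ⟨k, hk, hc⟩]
  rw [← h1, h2]

lemma iter_eq_nxt {q : α → Option α} {i : α} (h : Cyc q i) (k : ℕ) :
    (step q)^[k + 1] (some i) = (step q)^[k] (some (nxt q i)) := by
  rw [Function.iterate_succ_apply, step_some, cyc_q_some h]

/-- injectivity of nxt on cyclic points -/
lemma nxt_injOn {q : α → Option α} {i j : α} (hi : Cyc q i) (hj : Cyc q j)
    (hij : nxt q i = nxt q j) : i = j := by
  obtain ⟨a, ha, hca⟩ := hi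
  obtain ⟨b, hb, hcb⟩ := hj
  set l := nxt q i with hl
  -- ι k := iterates from l
  have hql_i : q i = some l := cyc_q_some ⟨a, ha, hca⟩
  have hql_j : q j = some l := by rw [cyc_q_some ⟨b, hb, hcb⟩, ← hij]
  -- some i = ι (a-1)
  obtain ⟨a', rfl⟩ : ∃ a', a = a' + 1 := ⟨a - 1, by omega⟩
  obtain ⟨b', rfl⟩ : ∃ b', b = b' + 1 := ⟨b - 1, by omega⟩
  have hia : (step q)^[a'] (some l) = some i := by
    have := hca
    rw [Function.iterate_succ_apply, step_some, hql_i] at this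
    exact this
  have hjb : (step q)^[b'] (some l) = some j := by
    have := hcb
    rw [Function.iterate_succ_apply, step_some, hql_j] at this
    exact this
  -- ι has period a'+1 and b'+1
  have hpa : (step q)^[a' + 1] (some l) = some l := by
    rw [Function.iterate_succ_apply', hia, step_some, hql_i]
  have hpb : (step q)^[b' + 1] (some l) = some l := by
    rw [Function.iterate_succ_apply', hjb, step_some, hql_j]
  have hper : ∀ p : ℕ, (step q)^[p] (some l) = some l →
      ∀ m k : ℕ, (step q)^[k + m * p] (some l) = (step q)^[k] (some l) := by
    intro p hp m
    induction m with
    | zero => intro k; simp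
    | succ m ih =>
      intro k
      have : k + (m + 1) * p = (k + m * p) + p := by ring
      rw [this, Function.iterate_add_apply, hp, ih k]
  have e1 : (step q)^[a' + b' * (a' + 1)] (some l) = some i := by
    rw [hper (a' + 1) hpa b' a', hia]
  have e2 : (step q)^[b' + a' * (b' + 1)] (some l) = some j := by
    rw [hper (b' + 1) hpb a' b', hjb]
  have harith : a' + b' * (a' + 1) = b' + a' * (b' + 1) := by ring
  rw [harith, e2] at e1
  exact (Option.some_injective α e1).symm

noncomputable def Mset (q : α → Option α) : Finset α := univ.filter (Cyc q)

lemma mem_Mset {q : α → Option α} {i : α} : i ∈ Mset q ↔ Cyc q i := by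
  simp [Mset]

lemma image_nxt_Mset (q : α → Option α) : (Mset q).image (nxt q) = Mset q := by
  apply Finset.eq_of_subset_of_card_le
  · intro j hj
    obtain ⟨i, hi, rfl⟩ := Finset.mem_image.1 hj
    exact mem_Mset.2 (cyc_nxt (mem_Mset.1 hi))
  · rw [Finset.card_image_of_injOn (fun i hi j hj h => nxt_injOn (mem_Mset.1 hi) (mem_Mset.1 hj) h)]

lemma sum_nxt_Mset (q : α → Option α) (g : α → ℝ) :
    ∑ i ∈ Mset q, g (nxt q i) = ∑ i ∈ Mset q, g i := by
  rw [← Finset.sum_image (fun i hi j hj h => nxt_injOn (mem_Mset.1 hi) (mem_Mset.1 hj) h),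
    image_nxt_Mset]

/-! rank function -/

def alive (q : α → Option α) (i : α) (k : ℕ) : Prop :=
  ∃ j, (step q)^[k] (some i) = some j ∧ ¬ Cyc q j

lemma exists_not_alive (q : α → Option α) (i : α) : ∃ k, ¬ alive q i k := by
  by_contra h
  push_neg at h
  set jf : ℕ → α := fun k => Classical.choose (h k) with hjf
  have hspec : ∀ k, (step q)^[k] (some i) = some (jf k) ∧ ¬ Cyc q (jf k) :=
    fun k => Classical.choose_spec (h k)
  have key : ∀ a b : ℕ, a < b → jf a ≠ jf b := by
    intro a b hab he
    have ha := hspec a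
    have hb := hspec b
    have hstep : (step q)^[b - a] (some (jf a)) = some (jf a) := by
      have h2 : (step q)^[(b - a) + a] (some i) = some (jf b) := by
        rw [Nat.sub_add_cancel (le_of_lt hab)]
        exact hb.1
      rw [Function.iterate_add_apply, ha.1] at h2
      rw [h2, he]
    exact ha.2 ⟨b - a, by omega, hstep⟩
  have hinj : Function.Injective (fun k : Fin (Fintype.card α + 1) => jf k.1) := by
    intro a b hab
    rcases lt_trichotomy a.1 b.1 with h' | h' | h'
    · exact absurd hab (key _ _ h')
    · exact Fin.ext h'
    · exact absurd hab.symm (key _ _ h')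
  have := Fintype.card_le_of_injective _ hinj
  simp at this

noncomputable def rk (q : α → Option α) (i : α) : ℕ := Nat.find (exists_not_alive q i)

lemma not_alive_rk (q : α → Option α) (i : α) : ¬ alive q i (rk q i) :=
  Nat.find_spec (exists_not_alive q i)

lemma rk_le {q : α → Option α} {i : α} {k : ℕ} (h : ¬ alive q i k) : rk q i ≤ k :=
  Nat.find_min' (exists_not_alive q i) h

lemma alive_of_lt_rk {q : α → Option α} {i : α} {k : ℕ} (h : k < rk q i) : alive q i k :=
  not_not.mp (Nat.find_min (exists_not_alive q i) h)

lemma rk_eq_zero_of_cyc {q : α → Option α} {i : α} (h : Cyc q i) : rk q i = 0 := by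
  have h0 : ¬ alive q i 0 := by
    rintro ⟨j, hj, hcj⟩
    simp only [Function.iterate_zero_apply, Option.some_inj] at hj
    exact hcj (hj ▸ h)
  exact Nat.le_zero.mp (rk_le h0)

lemma alive_shift {q : α → Option α} {i w : α} (hq : q i = some w) (k : ℕ) :
    alive q i (k + 1) ↔ alive q w k := by
  unfold alive
  rw [Function.iterate_succ_apply, step_some, hq]

lemma rk_succ {q : α → Option α} {i : α} (hnc : ¬ Cyc q i) {w : α} (hq : q i = some w) :
    rk q i = rk q w + 1 := by
  have h0 : alive q i 0 := ⟨i, rfl, hnc⟩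
  have h1 : 1 ≤ rk q i := by
    by_contra h
    have h2 : rk q i = 0 := by omega
    exact (h2 ▸ not_alive_rk q i) h0
  have hle : rk q w ≤ rk q i - 1 := by
    apply rk_le
    rw [← alive_shift hq]
    have h3 : (rk q i - 1) + 1 = rk q i := by omega
    rw [h3]
    exact not_alive_rk q i
  have hge : rk q i - 1 ≤ rk q w := by
    by_contra h
    push_neg at h
    have h4 : rk q w + 1 < rk q i := by omega
    exact not_alive_rk q w ((alive_shift hq _).1 (alive_of_lt_rk h4))
  omega


lemma one_add_exp_pos (t : ℝ) : (0:ℝ) < 1 + Real.exp t := by positivity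

lemma log_term_eq (t : ℝ) : Real.log (1 / (1 + Real.exp t)) = -Real.log (1 + Real.exp t) := by
  rw [one_div, Real.log_inv]

lemma log_one_add_exp_ge (t : ℝ) : Real.log 2 + t / 2 ≤ Real.log (1 + Real.exp t) := by
  have h1 : 2 * Real.exp (t / 2) ≤ 1 + Real.exp t := by
    have hsq : (1 - Real.exp (t / 2)) ^ 2 ≥ 0 := sq_nonneg _
    have he : Real.exp t = Real.exp (t / 2) * Real.exp (t / 2) := by
      rw [← Real.exp_add]; ring_nf
    nlinarith [Real.exp_pos (t / 2)]
  calc Real.log 2 + t / 2 = Real.log (2 * Real.exp (t / 2)) := by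
        rw [Real.log_mul (by norm_num) (Real.exp_ne_zero _), Real.log_exp]
    _ ≤ Real.log (1 + Real.exp t) := Real.log_le_log (by positivity) h1

lemma log_one_add_exp_nonneg (t : ℝ) : 0 ≤ Real.log (1 + Real.exp t) := by
  have := Real.exp_pos t
  have : (1:ℝ) ≤ 1 + Real.exp t := by linarith
  exact Real.log_nonneg this

lemma log_one_add_exp_le (t : ℝ) : Real.log (1 + Real.exp t) ≤ Real.exp t := by
  have h := Real.log_le_sub_one_of_pos (one_add_exp_pos t)
  linarith

lemma log_term_zero : Real.log (1 + Real.exp 0) = Real.log 2 := by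
  rw [Real.exp_zero]; norm_num

/-- interpolation: a continuous function with prescribed values on a finite set -/
lemma exists_interp {E : Type*} [MetricSpace E] (P : Finset E) (v : E → ℝ) :
    ∃ f : E → ℝ, Continuous f ∧ ∀ p ∈ P, f p = v p := by
  classical
  refine ⟨fun z => ∑ j ∈ P, v j * ∏ k ∈ P.erase j, (dist z k / dist j k), ?_, ?_⟩
  · apply continuous_finset_sum
    intro j _
    apply Continuous.mul continuous_const
    apply continuous_finset_prod
    intro k _
    exact (Continuous.dist continuous_id continuous_const).div_const _
  · intro p hp
    simp only []
    rw [Finset.sum_eq_single_of_mem p hp]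
    · rw [Finset.prod_congr rfl (fun k hk => ?_), Finset.prod_const_one, mul_one]
      have hkp : k ≠ p := Finset.ne_of_mem_erase hk
      rw [div_self (dist_ne_zero.2 (Ne.symm hkp))]
    · intro j hj hjp
      have hpj : p ∈ P.erase j := Finset.mem_erase.2 ⟨Ne.symm hjp, hp⟩
      rw [Finset.prod_eq_zero hpj (by rw [dist_self, zero_div]), mul_zero]

end RSaux

/-- The RS-GAN loss
φ_RS(Y, X) = sup over continuous f of (1/n) · Σ_i log(1/(1 + exp(f(y_i) − f(x_i)))). -/
noncomputable def phiRS {d n : ℕ} (x Y : Fin n → EuclideanSpace ℝ (Fin d)) : ℝ :=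
  sSup {s : ℝ | ∃ f : EuclideanSpace ℝ (Fin d) → ℝ, Continuous f ∧
    s = (1 / (n : ℝ)) * ∑ i, Real.log (1 / (1 + Real.exp (f (Y i) - f (x i))))}

namespace RSaux

open scoped Classical

variable {d n : ℕ}

/-- partial successor structure of a configuration -/
noncomputable def qaux (x : Fin n → EuclideanSpace ℝ (Fin d))
    (p : EuclideanSpace ℝ (Fin d)) : Option (Fin n) :=
  if h : ∃ j, p = x j then some h.choose else none

noncomputable def qof (x Y : Fin n → EuclideanSpace ℝ (Fin d)) : Fin n → Option (Fin n) :=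
  fun i => qaux x (Y i)

lemma qaux_eq_some {x : Fin n → EuclideanSpace ℝ (Fin d)} (hx : Function.Injective x)
    {p : EuclideanSpace ℝ (Fin d)} {j : Fin n} : qaux x p = some j ↔ p = x j := by
  constructor
  · intro h
    by_cases hex : ∃ k, p = x k
    · unfold qaux at h
      rw [dif_pos hex, Option.some_inj] at h
      rw [hex.choose_spec, h]
    · unfold qaux at h
      rw [dif_neg hex] at h
      cases h
  · intro h
    have hex : ∃ k, p = x k := ⟨j, h⟩
    have hcs := hex.choose_spec
    have : hex.choose = j := hx (by rw [← hcs, h])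
    unfold qaux
    rw [dif_pos hex, this]

lemma qof_eq_some {x : Fin n → EuclideanSpace ℝ (Fin d)} (hx : Function.Injective x)
    {Y : Fin n → EuclideanSpace ℝ (Fin d)} {i j : Fin n} :
    qof x Y i = some j ↔ Y i = x j := qaux_eq_some hx

lemma qof_eq_none {x : Fin n → EuclideanSpace ℝ (Fin d)}
    {Y : Fin n → EuclideanSpace ℝ (Fin d)} {i : Fin n} :
    qof x Y i = none ↔ ¬ ∃ j, Y i = x j := by
  unfold qof qaux
  constructor
  · intro h hex
    rw [dif_pos hex] at h
    cases h
  · intro h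
    rw [dif_neg h]

/-- the natural number m(Y): number of points on cycles -/
noncomputable def mOf (x Y : Fin n → EuclideanSpace ℝ (Fin d)) : ℕ := (Mset (qof x Y)).card

lemma sum_upper {x : Fin n → EuclideanSpace ℝ (Fin d)} (hx : Function.Injective x)
    (Y : Fin n → EuclideanSpace ℝ (Fin d)) (f : EuclideanSpace ℝ (Fin d) → ℝ) :
    ∑ i, Real.log (1 / (1 + Real.exp (f (Y i) - f (x i)))) ≤
      -((mOf x Y : ℝ) * Real.log 2) := by
  classical
  set q := qof x Y with hq
  set g : Fin n → ℝ := fun i => Real.log (1 / (1 + Real.exp (f (Y i) - f (x i)))) with hg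
  have hsplit : ∑ i, g i = ∑ i ∈ Mset q, g i + ∑ i ∈ (Mset q)ᶜ, g i :=
    (Finset.sum_add_sum_compl (Mset q) g).symm
  have hcompl : ∑ i ∈ (Mset q)ᶜ, g i ≤ 0 := by
    apply Finset.sum_nonpos
    intro i _
    rw [hg]
    simp only []
    rw [log_term_eq]
    linarith [log_one_add_exp_nonneg (f (Y i) - f (x i))]
  have hM : ∑ i ∈ Mset q, g i ≤
      ∑ i ∈ Mset q, (-Real.log 2 - (f (Y i) - f (x i)) / 2) := by
    apply Finset.sum_le_sum
    intro i _
    rw [hg]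
    simp only []
    rw [log_term_eq]
    linarith [log_one_add_exp_ge (f (Y i) - f (x i))]
  have htel : ∑ i ∈ Mset q, (f (Y i) - f (x i)) = 0 := by
    have hYx : ∀ i ∈ Mset q, f (Y i) = f (x (nxt q i)) := by
      intro i hi
      have hqi : q i = some (nxt q i) := cyc_q_some (mem_Mset.1 hi)
      rw [(qof_eq_some hx).1 hqi]
    rw [Finset.sum_sub_distrib, Finset.sum_congr rfl hYx]
    have := sum_nxt_Mset q (fun j => f (x j))
    rw [this]
    ring
  have h2 : ∑ i ∈ Mset q, (-Real.log 2 - (f (Y i) - f (x i)) / 2) =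
      -((mOf x Y : ℝ) * Real.log 2) := by
    rw [Finset.sum_sub_distrib, Finset.sum_const, ← Finset.sum_div, htel]
    simp only [nsmul_eq_mul, zero_div, sub_zero, mOf]
    ring
  calc ∑ i, g i = ∑ i ∈ Mset q, g i + ∑ i ∈ (Mset q)ᶜ, g i := hsplit
    _ ≤ ∑ i ∈ Mset q, (-Real.log 2 - (f (Y i) - f (x i)) / 2) + 0 := by
        exact add_le_add hM hcompl
    _ = -((mOf x Y : ℝ) * Real.log 2) := by rw [add_zero, h2]

lemma sum_lower {x : Fin n → EuclideanSpace ℝ (Fin d)} (hx : Function.Injective x)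
    (Y : Fin n → EuclideanSpace ℝ (Fin d)) (T : ℝ) (hT : 0 ≤ T) :
    ∃ f : EuclideanSpace ℝ (Fin d) → ℝ, Continuous f ∧
      -((mOf x Y : ℝ) * Real.log 2) - n * Real.exp (-T) ≤
        ∑ i, Real.log (1 / (1 + Real.exp (f (Y i) - f (x i)))) := by
  classical
  set q := qof x Y with hq
  set P : Finset (EuclideanSpace ℝ (Fin d)) :=
    (Finset.univ.image x) ∪ (Finset.univ.image Y) with hP
  set v : EuclideanSpace ℝ (Fin d) → ℝ :=
    fun p => if h : ∃ j, p = x j then T * rk q h.choose else -(T * (n + 1)) with hv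
  obtain ⟨f, hfc, hfv⟩ := exists_interp P v
  refine ⟨f, hfc, ?_⟩
  have hfx : ∀ j, f (x j) = T * rk q j := by
    intro j
    have hmem : x j ∈ P := Finset.mem_union_left _ (Finset.mem_image_of_mem x (mem_univ j))
    rw [hfv _ hmem, hv]
    simp only []
    have hex : ∃ k, x j = x k := ⟨j, rfl⟩
    rw [dif_pos hex]
    have : hex.choose = j := hx hex.choose_spec.symm
    rw [this]
  have hfY : ∀ i, f (Y i) = v (Y i) := by
    intro i
    exact hfv _ (Finset.mem_union_right _ (Finset.mem_image_of_mem Y (mem_univ i)))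
  -- per-term bounds
  have hterm : ∀ i : Fin n,
      (if Cyc q i then -Real.log 2 else -Real.exp (-T)) ≤
        Real.log (1 / (1 + Real.exp (f (Y i) - f (x i)))) := by
    intro i
    rw [log_term_eq]
    by_cases hc : Cyc q i
    · rw [if_pos hc]
      have hqi : q i = some (nxt q i) := cyc_q_some hc
      have hYi : Y i = x (nxt q i) := (qof_eq_some hx).1 hqi
      have : f (Y i) - f (x i) = 0 := by
        rw [hYi, hfx, hfx, rk_eq_zero_of_cyc hc, rk_eq_zero_of_cyc (cyc_nxt hc)]
        ring
      rw [this, log_term_zero]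
    · rw [if_neg hc]
      have hdelta : f (Y i) - f (x i) ≤ -T := by
        cases hqi : q i with
        | some w =>
          have hYi : Y i = x w := (qof_eq_some hx).1 hqi
          have hrk : rk q i = rk q w + 1 := rk_succ hc hqi
          rw [hYi, hfx, hfx, hrk]
          push_cast
          nlinarith
        | none =>
          have hnex : ¬ ∃ j, Y i = x j := qof_eq_none.1 hqi
          have : v (Y i) = -(T * (n + 1)) := by rw [hv]; simp only []; rw [dif_neg hnex]
          rw [hfY, this, hfx]
          have h1 : 0 ≤ (rk q i : ℝ) := by positivity
          nlinarith
      have h1 : Real.log (1 + Real.exp (f (Y i) - f (x i))) ≤ Real.exp (-T) :=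
        le_trans (log_one_add_exp_le _) (Real.exp_le_exp.2 hdelta)
      linarith
  have hsum : ∑ i, (if Cyc q i then -Real.log 2 else -Real.exp (-T)) ≤
      ∑ i, Real.log (1 / (1 + Real.exp (f (Y i) - f (x i)))) :=
    Finset.sum_le_sum (fun i _ => hterm i)
  refine le_trans ?_ hsum
  rw [Finset.sum_ite, Finset.sum_const, Finset.sum_const]
  have hcard1 : (Finset.univ.filter (fun i => Cyc q i)).card = mOf x Y := by
    rfl
  have hcard2 : ((Finset.univ.filter (fun i => ¬ Cyc q i)).card : ℝ) ≤ n := by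
    have := Finset.card_filter_le (Finset.univ : Finset (Fin n)) (fun i => ¬ Cyc q i)
    simp only [Finset.card_univ, Fintype.card_fin] at this
    exact_mod_cast this
  rw [hcard1]
  have hexp : (0:ℝ) < Real.exp (-T) := Real.exp_pos _
  simp only [nsmul_eq_mul]
  nlinarith

lemma phi_nonempty_bdd (x Y : Fin n → EuclideanSpace ℝ (Fin d)) :
    (-Real.log 2 * 1 ∈ {s : ℝ | ∃ f : EuclideanSpace ℝ (Fin d) → ℝ, Continuous f ∧
      s = (1 / (n : ℝ)) * ∑ i, Real.log (1 / (1 + Real.exp (f (Y i) - f (x i))))} ∨ True) := by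
  exact Or.inr trivial

lemma phi_eq (hn : 1 ≤ n) {x : Fin n → EuclideanSpace ℝ (Fin d)} (hx : Function.Injective x)
    (Y : Fin n → EuclideanSpace ℝ (Fin d)) :
    phiRS x Y = -((mOf x Y : ℝ) * Real.log 2) / n := by
  classical
  have hn0 : (0:ℝ) < n := by exact_mod_cast hn
  set S : Set ℝ := {s : ℝ | ∃ f : EuclideanSpace ℝ (Fin d) → ℝ, Continuous f ∧
    s = (1 / (n : ℝ)) * ∑ i, Real.log (1 / (1 + Real.exp (f (Y i) - f (x i))))} with hS
  have hne : S.Nonempty := by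
    refine ⟨(1 / (n : ℝ)) * ∑ _i : Fin n, Real.log (1 / (1 + Real.exp ((0:ℝ) - 0))), ?_⟩
    exact ⟨fun _ => 0, continuous_const, rfl⟩
  have hbdd : BddAbove S := by
    refine ⟨0, ?_⟩
    rintro s ⟨f, hf, rfl⟩
    have hsum : ∑ i, Real.log (1 / (1 + Real.exp (f (Y i) - f (x i)))) ≤ 0 := by
      apply Finset.sum_nonpos
      intro i _
      rw [log_term_eq]
      linarith [log_one_add_exp_nonneg (f (Y i) - f (x i))]
    have : (0:ℝ) ≤ 1 / (n : ℝ) := by positivity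
    nlinarith
  have hupper : phiRS x Y ≤ -((mOf x Y : ℝ) * Real.log 2) / n := by
    apply csSup_le hne
    rintro s ⟨f, hf, rfl⟩
    have hsu := sum_upper hx Y f
    have h1 : (0:ℝ) ≤ 1 / (n : ℝ) := by positivity
    calc (1 / (n : ℝ)) * ∑ i, Real.log (1 / (1 + Real.exp (f (Y i) - f (x i))))
        ≤ (1 / (n : ℝ)) * (-((mOf x Y : ℝ) * Real.log 2)) :=
          mul_le_mul_of_nonneg_left hsu h1
      _ = -((mOf x Y : ℝ) * Real.log 2) / n := by ring
  have hlower : -((mOf x Y : ℝ) * Real.log 2) / n ≤ phiRS x Y := by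
    have key : ∀ ε : ℝ, 0 < ε → -((mOf x Y : ℝ) * Real.log 2) / n - ε ≤ phiRS x Y := by
      intro ε hε
      set T : ℝ := max 0 (-Real.log ε) with hT
      have hT0 : 0 ≤ T := le_max_left _ _
      have hexpT : Real.exp (-T) ≤ ε := by
        have h1 : -T ≤ Real.log ε := by
          have := le_max_right 0 (-Real.log ε)
          linarith
        calc Real.exp (-T) ≤ Real.exp (Real.log ε) := Real.exp_le_exp.2 h1
          _ = ε := Real.exp_log hε
      obtain ⟨f, hfc, hfb⟩ := sum_lower hx Y T hT0
      have hmem : (1 / (n : ℝ)) * ∑ i, Real.log (1 / (1 + Real.exp (f (Y i) - f (x i)))) ∈ S :=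
        ⟨f, hfc, rfl⟩
      have hle : (1 / (n : ℝ)) * ∑ i, Real.log (1 / (1 + Real.exp (f (Y i) - f (x i)))) ≤
          phiRS x Y := le_csSup hbdd hmem
      have h2 : -((mOf x Y : ℝ) * Real.log 2) / n - ε ≤
          (1 / (n : ℝ)) * ∑ i, Real.log (1 / (1 + Real.exp (f (Y i) - f (x i)))) := by
        have h3 : (1 / (n : ℝ)) * (-((mOf x Y : ℝ) * Real.log 2) - n * Real.exp (-T)) ≤
            (1 / (n : ℝ)) * ∑ i, Real.log (1 / (1 + Real.exp (f (Y i) - f (x i)))) := by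
          apply mul_le_mul_of_nonneg_left hfb (by positivity)
        have h4 : (1 / (n : ℝ)) * (-((mOf x Y : ℝ) * Real.log 2) - n * Real.exp (-T)) =
            -((mOf x Y : ℝ) * Real.log 2) / n - Real.exp (-T) := by
          field_simp
        rw [h4] at h3
        linarith
      linarith
    by_contra hcon
    push_neg at hcon
    have := key ((-((mOf x Y : ℝ) * Real.log 2) / n - phiRS x Y) / 2) (by linarith)
    linarith
  linarith

lemma update_qof {x : Fin n → EuclideanSpace ℝ (Fin d)}
    (Y : Fin n → EuclideanSpace ℝ (Fin d)) (i : Fin n) (z : EuclideanSpace ℝ (Fin d)) :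
    Function.update (qof x (Function.update Y i z)) i none =
      Function.update (qof x Y) i none := by
  funext j
  by_cases hj : j = i
  · subst hj; rw [Function.update_self, Function.update_self]
  · rw [Function.update_of_ne hj, Function.update_of_ne hj]
    unfold qof
    rw [Function.update_of_ne hj]

lemma Mset_eq_of_not_into {α : Type*} [Fintype α] [DecidableEq α]
    {q : α → Option α} {i : α}
    (h : ¬ ∃ w, q i = some w ∧
      ∃ r, (step (Function.update q i none))^[r] (some w) = some i) :
    Mset q = Mset (Function.update q i none) := by
  have hnc : ¬ Cyc q i := fun hc => h ((cyc_iff q i).1 hc)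
  ext j
  rw [mem_Mset, mem_Mset, cyc_update_iff hnc j]

lemma Mset_card_lt_of_into {α : Type*} [Fintype α] [DecidableEq α]
    {q : α → Option α} {i w : α} (hqi : q i = some w)
    (hw : ∃ r, (step (Function.update q i none))^[r] (some w) = some i) :
    (Mset (Function.update q i none)).card + 1 ≤ (Mset q).card := by
  classical
  have hic : Cyc q i := (cyc_iff q i).2 ⟨w, hqi, hw⟩
  have hsub : insert i (Mset (Function.update q i none)) ⊆ Mset q := by
    intro j hj
    rcases Finset.mem_insert.1 hj with rfl | hj
    · exact mem_Mset.2 hic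
    · exact mem_Mset.2 (cyc_of_update (mem_Mset.1 hj))
  have hnm : i ∉ Mset (Function.update q i none) := by
    rw [mem_Mset]
    exact not_cyc_update_self q i
  calc (Mset (Function.update q i none)).card + 1
      = (insert i (Mset (Function.update q i none))).card :=
        (Finset.card_insert_of_notMem hnm).symm
    _ ≤ (Mset q).card := Finset.card_le_card hsub

end RSaux

theorem stmt12 {d n : ℕ} (hd : 1 ≤ d) (hn : 1 ≤ n)
    (x : Fin n → EuclideanSpace ℝ (Fin d)) (hx : Function.Injective x) :
    ∀ Y : Fin n → EuclideanSpace ℝ (Fin d),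
      ¬ (∀ Y' : Fin n → EuclideanSpace ℝ (Fin d), phiRS x Y ≤ phiRS x Y') →
      ∃ (Yhat : Fin n → EuclideanSpace ℝ (Fin d))
        (γ : ℝ → (Fin n → EuclideanSpace ℝ (Fin d))),
        ContinuousOn γ (Set.Icc 0 1) ∧ γ 0 = Y ∧ γ 1 = Yhat ∧
        (∀ s ∈ Set.Icc (0 : ℝ) 1, ∀ t ∈ Set.Icc (0 : ℝ) 1, s ≤ t →
          phiRS x (γ t) ≤ phiRS x (γ s)) ∧
        phiRS x Yhat ≤ phiRS x Y - Real.log 2 / n := by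
  classical
  open RSaux in
  intro Y hY
  push_neg at hY
  obtain ⟨Y', hY'⟩ := hY
  have hn0 : (0:ℝ) < n := by exact_mod_cast hn
  have hlog2 : (0:ℝ) < Real.log 2 := Real.log_pos one_lt_two
  -- m(Y) < n
  have hmn : ∀ Z : Fin n → EuclideanSpace ℝ (Fin d), RSaux.mOf x Z ≤ n := by
    intro Z
    have := Finset.card_le_univ (RSaux.Mset (RSaux.qof x Z))
    simpa [RSaux.mOf] using this
  have hmY : RSaux.mOf x Y < n := by
    by_contra h
    push_neg at h
    have hYn : RSaux.mOf x Y = n := le_antisymm (hmn Y) h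
    rw [RSaux.phi_eq hn hx Y, RSaux.phi_eq hn hx Y', hYn] at hY'
    have := hmn Y'
    have hcast : (RSaux.mOf x Y' : ℝ) ≤ n := by exact_mod_cast this
    rw [div_lt_div_iff₀ hn0 hn0] at hY'
    nlinarith [mul_le_mul_of_nonneg_right hcast hlog2.le]
  -- pick a non-cyclic index
  obtain ⟨i, hi⟩ : ∃ i : Fin n, ¬ RSaux.Cyc (RSaux.qof x Y) i := by
    by_contra h
    push_neg at h
    have : RSaux.Mset (RSaux.qof x Y) = Finset.univ := by
      ext j; simp [RSaux.mem_Mset, h j]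
    have : RSaux.mOf x Y = n := by
      rw [RSaux.mOf, this]; simp
    omega
  set q : Fin n → Option (Fin n) := RSaux.qof x Y with hq
  set q' : Fin n → Option (Fin n) := Function.update q i none with hq'
  set A : Finset (Fin n) :=
    Finset.univ.filter (fun j => ∃ r, (RSaux.step q')^[r] (some j) = some i) with hA
  have hiA : i ∈ A := by
    rw [hA, Finset.mem_filter]
    exact ⟨Finset.mem_univ i, ⟨0, rfl⟩⟩
  obtain ⟨jst, hjstA, hjstmin⟩ :=
    Finset.exists_min_image A (fun j => dist (x j) (Y i)) ⟨i, hiA⟩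
  have hYixA : ∀ j ∈ A, Y i ≠ x j := by
    intro j hj he
    apply hi
    apply (RSaux.cyc_iff q i).2
    refine ⟨j, (RSaux.qof_eq_some hx).2 he, ?_⟩
    rw [hA, Finset.mem_filter] at hj
    exact hj.2
  have hYijst : Y i ≠ x jst := hYixA jst hjstA
  set Yhat : Fin n → EuclideanSpace ℝ (Fin d) := Function.update Y i (x jst) with hYhat
  set γ : ℝ → (Fin n → EuclideanSpace ℝ (Fin d)) :=
    fun t => Function.update Y i (Y i + t • (x jst - Y i)) with hγ
  have hγ0 : γ 0 = Y := by
    rw [hγ]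
    simp only [zero_smul, add_zero]
    exact Function.update_eq_self i Y
  have hγ1 : γ 1 = Yhat := by
    have h1 : Y i + (1:ℝ) • (x jst - Y i) = x jst := by module
    rw [hγ, hYhat]
    show Function.update Y i (Y i + (1:ℝ) • (x jst - Y i)) = Function.update Y i (x jst)
    rw [h1]
  have hcont : ContinuousOn γ (Set.Icc 0 1) := by
    apply Continuous.continuousOn
    apply continuous_pi
    intro j
    by_cases hj : j = i
    · subst hj
      simp only [hγ, Function.update_self]
      fun_prop
    · simp only [hγ, Function.update_of_ne hj]
      exact continuous_const
  -- the key structure facts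
  have hupd : ∀ t : ℝ, Function.update (RSaux.qof x (γ t)) i none = q' := by
    intro t
    rw [hγ]
    exact update_qof Y i _
  have hupdY : Function.update (RSaux.qof x Yhat) i none = q' := by
    rw [hYhat]
    exact update_qof Y i _
  -- for t ∈ [0,1): no edge from i into A
  have hmid : ∀ t : ℝ, 0 ≤ t → t < 1 →
      ¬ ∃ w, RSaux.qof x (γ t) i = some w ∧
        ∃ r, (RSaux.step (Function.update (RSaux.qof x (γ t)) i none))^[r] (some w) = some i := by
    intro t ht0 ht1
    rintro ⟨w, hw, hr⟩
    rw [hupd t] at hr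
    have hwA : w ∈ A := by
      rw [hA, Finset.mem_filter]
      exact ⟨Finset.mem_univ w, hr⟩
    have hγti : γ t i = Y i + t • (x jst - Y i) := by
      rw [hγ]; exact Function.update_self i _ Y
    have hxw : γ t i = x w := (RSaux.qof_eq_some hx).1 hw
    have hdist : dist (x w) (Y i) = t * dist (x jst) (Y i) := by
      rw [dist_eq_norm, dist_eq_norm, ← hxw, hγti]
      have : Y i + t • (x jst - Y i) - Y i = t • (x jst - Y i) := by abel
      rw [this, norm_smul]
      simp [abs_of_nonneg ht0]
    have hpos : 0 < dist (x jst) (Y i) := by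
      rw [dist_pos]
      exact fun e => hYijst e.symm
    have hlt : dist (x w) (Y i) < dist (x jst) (Y i) := by
      rw [hdist]
      nlinarith
    exact absurd (hjstmin w hwA) (not_le.2 hlt)
  -- Mset of γ t for t ∈ [0,1) equals Mset q'
  have hMmid : ∀ t : ℝ, 0 ≤ t → t < 1 →
      RSaux.Mset (RSaux.qof x (γ t)) = RSaux.Mset q' := by
    intro t ht0 ht1
    have := RSaux.Mset_eq_of_not_into (hmid t ht0 ht1)
    rw [hupd t] at this
    exact this
  -- Mset of Yhat
  have hMend : (RSaux.Mset q').card + 1 ≤ RSaux.mOf x Yhat := by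
    have hqY : RSaux.qof x Yhat i = some jst := by
      apply (RSaux.qof_eq_some hx).2
      rw [hYhat]
      exact Function.update_self i _ Y
    have hrA : ∃ r, (RSaux.step (Function.update (RSaux.qof x Yhat) i none))^[r]
        (some jst) = some i := by
      rw [hupdY]
      rw [hA, Finset.mem_filter] at hjstA
      exact hjstA.2
    have := RSaux.Mset_card_lt_of_into hqY hrA
    rw [hupdY] at this
    exact this
  -- m(γ t) for t < 1 equals m(Y)
  have hmYq : RSaux.mOf x Y = (RSaux.Mset q').card := by
    have h0 : RSaux.Mset (RSaux.qof x (γ 0)) = RSaux.Mset q' := hMmid 0 le_rfl one_pos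
    rw [hγ0] at h0
    rw [RSaux.mOf, h0]
  refine ⟨Yhat, γ, hcont, hγ0, hγ1, ?_, ?_⟩
  · -- monotonicity
    intro s hs t ht hst
    rcases eq_or_lt_of_le ht.2 with h1 | h1
    · -- t = 1
      rcases eq_or_lt_of_le hs.2 with h2 | h2
      · -- s = 1 too
        rw [show s = t by rw [h1, ← h2]]
      · have hps : RSaux.mOf x (γ s) = (RSaux.Mset q').card := by
          rw [RSaux.mOf, hMmid s hs.1 h2]
        have hpt : (RSaux.Mset q').card + 1 ≤ RSaux.mOf x (γ t) := by
          rw [show γ t = Yhat by rw [h1, hγ1]]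
          exact hMend
        rw [RSaux.phi_eq hn hx (γ t), RSaux.phi_eq hn hx (γ s), hps]
        have hcast : ((RSaux.Mset q').card : ℝ) + 1 ≤ (RSaux.mOf x (γ t) : ℝ) := by
          exact_mod_cast hpt
        rw [div_le_div_iff₀ hn0 hn0]
        nlinarith [mul_le_mul_of_nonneg_right
          (mul_le_mul_of_nonneg_right hcast hlog2.le) hn0.le, mul_pos hlog2 hn0]
    · have hps : RSaux.mOf x (γ s) = (RSaux.Mset q').card := by
        rw [RSaux.mOf, hMmid s hs.1 (lt_of_le_of_lt hst h1)]
      have hpt : RSaux.mOf x (γ t) = (RSaux.Mset q').card := by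
        rw [RSaux.mOf, hMmid t ht.1 h1]
      rw [RSaux.phi_eq hn hx (γ t), RSaux.phi_eq hn hx (γ s), hps, hpt]
  · -- final bound
    rw [RSaux.phi_eq hn hx Yhat, RSaux.phi_eq hn hx Y, hmYq]
    have hc : ((RSaux.Mset q').card : ℝ) + 1 ≤ (RSaux.mOf x Yhat : ℝ) := by
      exact_mod_cast hMend
    rw [div_sub_div_same]
    rw [div_le_div_iff₀ hn0 hn0]
    nlinarith [mul_le_mul_of_nonneg_right
      (mul_le_mul_of_nonneg_right hc hlog2.le) hn0.le, mul_pos hlog2 hn0]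
end
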